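/- Let U be an irreducible AUD transition matrix on an infinite rooted locally finite tree T. Then for every end 𝕡 of T, the projected transition matrix U^𝕡 is an irreducible AUD transition matrix on the tree T^𝕡. Moreover, if there exists an end 𝕡 such that U^𝕡 is transient (i.e. not recurrent, where recurrence of U^𝕡 is defined via first-return loops at the root ∅ of T^𝕡), then U is transient. -/

import Mathlib

open scoped BigOperators ENNReal

/-- Nodes of trees are finite words over `ℕ`; the root is the empty word. -/
abbrev Word : Type := List ℕ

/-- The parent of a node: the word with its last letter removed. -/
def par (u : Word) : Word := u.dropLast

/-- A rooted locally finite tree: a set of words containing the root, closed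
under prefixes, in which every node has finitely many children. -/
def IsTree (T : Set Word) : Prop :=
  ([] : Word) ∈ T ∧
  (∀ u ∈ T, ∀ v : Word, v <+: u → v ∈ T) ∧
  (∀ u ∈ T, {i : ℕ | u ++ [i] ∈ T}.Finite)

/-- `desc T u` is the set of descendants of `u` in `T` (the subtree `T_u`). -/
def desc (T : Set Word) (u : Word) : Set Word := {w | w ∈ T ∧ u <+: w}

/-- The children of `u` in `T`. -/
def children (T : Set Word) (u : Word) : Set Word := {v | v ∈ T ∧ ∃ i : ℕ, v = u ++ [i]}

/-- A transition matrix on `T`: nonnegative entries, rows summing to 1 over `T`. -/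
def IsTransMatrix (T : Set Word) (U : Word → Word → ℝ) : Prop :=
  (∀ u ∈ T, ∀ v ∈ T, 0 ≤ U u v) ∧ ∀ u ∈ T, HasSum (fun v : T => U u (v : Word)) 1

/-- Almost upper-directed: positive transitions go to the parent or to a descendant. -/
def IsAUD (T : Set Word) (U : Word → Word → ℝ) : Prop :=
  ∀ u ∈ T, ∀ v ∈ T, 0 < U u v → v = par u ∨ v ∈ desc T u

/-- Almost lower-directed: positive transitions go to a child or to an ancestor. -/
def IsALD (T : Set Word) (D : Word → Word → ℝ) : Prop :=
  ∀ u ∈ T, ∀ v ∈ T, 0 < D u v → v ∈ children T u ∨ v <+: u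

/-- Random-walk transition matrix: positive transitions go to `u`, its parent or a child. -/
def IsRW (T : Set Word) (M : Word → Word → ℝ) : Prop :=
  ∀ u ∈ T, ∀ v ∈ T, 0 < M u v → v = u ∨ v = par u ∨ v ∈ children T u

/-- Irreducibility: any node can be reached from any other by positive transitions. -/
def IrreducibleOn (T : Set Word) (U : Word → Word → ℝ) : Prop :=
  ∀ u ∈ T, ∀ v ∈ T, ∃ (n : ℕ) (x : ℕ → Word),
    x 0 = u ∧ x n = v ∧ (∀ k ≤ n, x k ∈ T) ∧ ∀ k < n, 0 < U (x k) (x (k + 1))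

/-- The weight of a path (a list of nodes): product of the transitions along it. -/
def wgt (U : Word → Word → ℝ) : List Word → ℝ
  | x :: y :: rest => U x y * wgt U (y :: rest)
  | _ => 1

/-- A first-return loop at the root. -/
def IsLoop (T : Set Word) (γ : List Word) : Prop :=
  2 ≤ γ.length ∧ γ.head? = some ([] : Word) ∧ γ.getLast? = some ([] : Word) ∧
  (∀ x ∈ γ, x ∈ T) ∧
  ∀ k, 0 < k → k < γ.length - 1 → γ.getD k [] ≠ ([] : Word)

/-- The total weight of first-return loops at the root. -/
noncomputable def loopSum (T : Set Word) (U : Word → Word → ℝ) : ℝ :=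
  ∑' γ : {γ : List Word // IsLoop T γ}, wgt U γ.1

/-- Recurrence: the total weight of first-return loops at the root is 1. -/
def Recurrent (T : Set Word) (U : Word → Word → ℝ) : Prop := loopSum T U = 1

/-- Expected return time to the root. -/
noncomputable def returnTime (T : Set Word) (U : Word → Word → ℝ) : ℝ≥0∞ :=
  ∑' γ : {γ : List Word // IsLoop T γ},
    ((γ.1.length - 1 : ℕ) : ℝ≥0∞) * ENNReal.ofReal (wgt U γ.1)

/-- Positive recurrence: recurrent with finite expected return time. -/
def PosRecurrent (T : Set Word) (U : Word → Word → ℝ) : Prop :=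
  Recurrent T U ∧ returnTime T U < ⊤

/-- `descWeight T U a b = U(a, T_b)`, the total weight from `a` into the subtree `T_b`. -/
noncomputable def descWeight (T : Set Word) (U : Word → Word → ℝ) (a b : Word) : ℝ :=
  ∑' w : desc T b, U a (w : Word)

/-- The matrix `(Id - ᵘU)^{(u)}`: rows/columns indexed by the strict prefixes of `u`
(the prefix of length `i` corresponds to the index `i`), the column of `u` removed. -/
noncomputable def hMat (T : Set Word) (U : Word → Word → ℝ) (u : Word) :
    Matrix (Fin u.length) (Fin u.length) ℝ :=
  Matrix.of fun i j =>
    (if i = j then 1 else 0) -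
      (if (i : ℕ) ≤ (j : ℕ) + 1 then
        descWeight T U (u.take i) (u.take j) - descWeight T U (u.take i) (u.take ((j : ℕ) + 1))
       else 0)

/-- The h-invariant measure `π` of an AUD transition matrix, with `π(∅) = 1`:
`π(u) = det((Id - ᵘU)^{(u)}) / ∏_{∅ ≠ v ⪯ u} U(v, p(v))`. -/
noncomputable def hInv (T : Set Word) (U : Word → Word → ℝ) (u : Word) : ℝ :=
  (hMat T U u).det / ∏ k ∈ Finset.range u.length, U (u.take (k + 1)) (u.take k)

/-- Paths from `i` to the root whose interior stays away from the root and below height `b`. -/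
def IsEscape (T : Set Word) (i : Word) (b : ℕ) (γ : List Word) : Prop :=
  2 ≤ γ.length ∧ γ.head? = some i ∧ γ.getLast? = some ([] : Word) ∧
  (∀ x ∈ γ, x ∈ T) ∧
  ∀ k, 0 < k → k < γ.length - 1 → γ.getD k [] ≠ ([] : Word) ∧ (γ.getD k []).length < b

/-- `qval T U i b`: total weight of paths from `i` to the root staying away from the
root and below height `b` in their interior. -/
noncomputable def qval (T : Set Word) (U : Word → Word → ℝ) (i : Word) (b : ℕ) : ℝ :=
  ∑' γ : {γ : List Word // IsEscape T i b γ}, wgt U γ.1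

/-- An end of a tree: an infinite injective path starting at the root. -/
def IsEnd (T : Set Word) (p : ℕ → Word) : Prop :=
  p 0 = [] ∧ ∀ k, p (k + 1) ∈ children T (p k)

/-- `T^𝕡`: the nodes of the end `𝕡` together with the finite subtrees hanging from
its neighbors. -/
def endTree (T : Set Word) (p : ℕ → Word) : Set Word :=
  Set.range p ∪
    {v | v ∈ T ∧ ∃ w ∈ T, w <+: v ∧ w ∉ Set.range p ∧ par w ∈ Set.range p ∧ (desc T w).Finite}

/-- `projTo T p w v`: the projection `℘_𝕡` sends `w` to `v` (fixing `T^𝕡`, and sending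
any other node to its highest ancestor on `𝕡`). -/
def projTo (T : Set Word) (p : ℕ → Word) (w v : Word) : Prop :=
  (w ∈ endTree T p ∧ v = w) ∨
  (w ∉ endTree T p ∧ v ∈ Set.range p ∧ v <+: w ∧
    ∀ v' ∈ Set.range p, v' <+: w → v' <+: v)

/-- The projected transition matrix `U^𝕡` on `T^𝕡`. -/
noncomputable def projMat (T : Set Word) (p : ℕ → Word) (U : Word → Word → ℝ)
    (u v : Word) : ℝ :=
  ∑' w : {w : Word // w ∈ T ∧ projTo T p w v}, U u (w : Word)

/-- Longest common prefix of two words. -/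
def lcp : Word → Word → Word
  | a :: as, b :: bs => if a = b then a :: lcp as bs else []
  | _, _ => []

/-- Graph distance on the tree. -/
def treeDist (u v : Word) : ℕ :=
  (u.length - (lcp u v).length) + (v.length - (lcp u v).length)

/-- A first-return path from `w` to the set `B`. -/
def IsReturnPath (T : Set Word) (B : Set Word) (w : Word) (γ : List Word) : Prop :=
  2 ≤ γ.length ∧ γ.head? = some w ∧ (∀ x ∈ γ, x ∈ T) ∧
  (∀ k, 0 < k → k < γ.length - 1 → γ.getD k [] ∉ B) ∧
  ∃ z ∈ B, γ.getLast? = some z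

open Classical in
/-- `expReturn T U B w`: the expected first-return time from `w` to `B`, set to `∞`
when return to `B` is not almost sure. -/
noncomputable def expReturn (T : Set Word) (U : Word → Word → ℝ) (B : Set Word)
    (w : Word) : ℝ≥0∞ :=
  if (∑' γ : {γ : List Word // IsReturnPath T B w γ}, wgt U γ.1) = 1 then
    ∑' γ : {γ : List Word // IsReturnPath T B w γ},
      ((γ.1.length - 1 : ℕ) : ℝ≥0∞) * ENNReal.ofReal (wgt U γ.1)
  else ⊤

/-- `P(T)`: nodes with infinitely many descendants (union of the ends of `T`). -/
def Ptree (T : Set Word) : Set Word := {u | u ∈ T ∧ (desc T u).Infinite}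

/-- `Q(T) = 1 + ∑_{u ∈ P(T)} (|c_{P(T)}(u)| - 1)`, valued in `ℝ≥0∞`. -/
noncomputable def Qval (T : Set Word) : ℝ≥0∞ :=
  1 + ∑' u : Ptree T, (((children (Ptree T) (u : Word)).ncard - 1 : ℕ) : ℝ≥0∞)

/-- Complex version of `hMat`, with `λ` on the diagonal: `(λ·Id - ᵘU)^{(u)}`. -/
noncomputable def hMatC (T : Set Word) (U : Word → Word → ℝ) (lam : ℂ) (u : Word) :
    Matrix (Fin u.length) (Fin u.length) ℂ :=
  Matrix.of fun i j =>
    (if i = j then lam else 0) -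
      (if (i : ℕ) ≤ (j : ℕ) + 1 then
        ((descWeight T U (u.take i) (u.take j) : ℝ) : ℂ) -
          ((descWeight T U (u.take i) (u.take ((j : ℕ) + 1)) : ℝ) : ℂ)
       else 0)

/-- `π^{(λ)}(u) = det((λ·Id - ᵘU)^{(u)}) / ∏_{∅ ≠ v ⪯ u} U(v, p(v))`. -/
noncomputable def piLam (T : Set Word) (U : Word → Word → ℝ) (lam : ℂ) (u : Word) : ℂ :=
  (hMatC T U lam u).det /
    ∏ k ∈ Finset.range u.length, ((U (u.take (k + 1)) (u.take k) : ℝ) : ℂ)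

/-- The measure `π̄` of a random walk: `π̄(u) = ∏_j M(u[j-1],u[j]) / M(u[j],u[j-1])`. -/
noncomputable def rwInv (M : Word → Word → ℝ) (u : Word) : ℝ :=
  ∏ k ∈ Finset.range u.length, (M (u.take k) (u.take (k + 1)) / M (u.take (k + 1)) (u.take k))


section EPproof
open scoped Classical
namespace EP
variable {T : Set Word} {p : ℕ → Word} {U : Word → Word → ℝ}

variable {T : Set Word} {p : ℕ → Word}

lemma prefix_dropLast {v u : Word} (h : v <+: u) (hne : v ≠ u) : v <+: u.dropLast := by
  obtain ⟨t, rfl⟩ := h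
  rcases List.eq_nil_or_concat t with rfl | ⟨t', x, rfl⟩
  · simp at hne
  · rw [List.concat_eq_append, ← List.append_assoc, List.dropLast_concat]
    exact ⟨t', rfl⟩

lemma p_mem (hT : IsTree T) (hp : IsEnd T p) (k : ℕ) : p k ∈ T := by
  cases k with
  | zero => rw [hp.1]; exact hT.1
  | succ n => exact (hp.2 n).1

lemma p_len (hp : IsEnd T p) (k : ℕ) : (p k).length = k := by
  induction k with
  | zero => rw [hp.1]; rfl
  | succ n ih =>
    obtain ⟨_, i, hi⟩ := hp.2 n
    rw [hi, List.length_append, ih]; rfl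

lemma p_prefix (hp : IsEnd T p) {j k : ℕ} (h : j ≤ k) : p j <+: p k := by
  induction k with
  | zero => rw [Nat.le_zero.mp h]
  | succ n ih =>
    rcases Nat.lt_or_ge j (n+1) with h' | h'
    · obtain ⟨_, i, hi⟩ := hp.2 n
      exact (ih (Nat.lt_succ_iff.mp h')).trans (by rw [hi]; exact ⟨[i], rfl⟩)
    · rw [Nat.le_antisymm h h']

lemma range_closed (hp : IsEnd T p) {v w : Word} (h : v <+: w) (hw : w ∈ Set.range p) :
    v ∈ Set.range p := by
  obtain ⟨k, rfl⟩ := hw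
  refine ⟨v.length, ?_⟩
  have hlen : v.length ≤ k := by simpa [p_len hp k] using h.length_le
  exact (List.prefix_of_prefix_length_le (p_prefix hp hlen) h (by rw [p_len hp])).eq_of_length
    (by rw [p_len hp])

lemma range_sub_S : Set.range p ⊆ endTree T p := Set.subset_union_left

lemma root_S (hp : IsEnd T p) : ([] : Word) ∈ endTree T p := range_sub_S ⟨0, hp.1⟩

lemma S_sub (hT : IsTree T) (hp : IsEnd T p) : endTree T p ⊆ T := by
  rintro v (⟨k, rfl⟩ | hv)
  · exact p_mem hT hp k
  · exact hv.1

lemma off_not_range {u : Word} (hu : u ∉ endTree T p) : u ∉ Set.range p :=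
  fun h => hu (range_sub_S h)

lemma off_desc_off (hp : IsEnd T p) {u w : Word} (hu : u ∈ T) (huS : u ∉ endTree T p)
    (hw : w ∈ T) (hpre : u <+: w) : w ∉ endTree T p := by
  rintro (hr | ⟨_, w₁, hw₁T, hw₁pre, hw₁r, hparr, hfin⟩)
  · exact off_not_range huS (range_closed hp hpre hr)
  · rcases List.prefix_or_prefix_of_prefix hpre hw₁pre with h1 | h2
    · rcases eq_or_ne u w₁ with rfl | hne
      · exact huS (Or.inr ⟨hu, u, hw₁T, List.prefix_refl _, hw₁r, hparr, hfin⟩)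
      · exact off_not_range huS (range_closed hp (prefix_dropLast h1 hne) hparr)
    · exact huS (Or.inr ⟨hu, w₁, hw₁T, h2, hw₁r, hparr, hfin⟩)

variable {T : Set Word} {p : ℕ → Word}

noncomputable def projF (T : Set Word) (p : ℕ → Word) (w : Word) : Word :=
  if w ∈ endTree T p then w else p (Nat.findGreatest (fun k => p k <+: w) w.length)

lemma pref_antisymm {l₁ l₂ : Word} (h : l₁ <+: l₂) (h' : l₂ <+: l₁) : l₁ = l₂ :=
  h.eq_of_length (Nat.le_antisymm h.length_le h'.length_le)

lemma projF_of_mem {w : Word} (h : w ∈ endTree T p) : projF T p w = w := if_pos h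

lemma projF_off_range {w : Word} (h : w ∉ endTree T p) : projF T p w ∈ Set.range p := by
  rw [projF, if_neg h]; exact ⟨_, rfl⟩

lemma projF_off_prefix (hp : IsEnd T p) {w : Word} (h : w ∉ endTree T p) :
    projF T p w <+: w := by
  rw [projF, if_neg h]
  exact Nat.findGreatest_spec (P := fun k => p k <+: w) (m := 0) (Nat.zero_le _) (by show p 0 <+: w; rw [hp.1]; exact List.nil_prefix)

lemma projF_off_max (hp : IsEnd T p) {w v' : Word} (h : w ∉ endTree T p)
    (hv' : v' ∈ Set.range p) (hpre : v' <+: w) : v' <+: projF T p w := by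
  rw [projF, if_neg h]
  obtain ⟨k, rfl⟩ := hv'
  have hk : k ≤ w.length := by simpa [p_len hp k] using hpre.length_le
  exact p_prefix hp (Nat.le_findGreatest hk hpre)

lemma projTo_projF (hp : IsEnd T p) {w : Word} (hw : w ∈ T) : projTo T p w (projF T p w) := by
  by_cases h : w ∈ endTree T p
  · exact Or.inl ⟨h, projF_of_mem h⟩
  · exact Or.inr ⟨h, projF_off_range h, projF_off_prefix hp h, fun v' hv' hp' => projF_off_max hp h hv' hp'⟩

lemma projTo_unique (hp : IsEnd T p) {w v : Word} (h : projTo T p w v) : v = projF T p w := by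
  rcases h with ⟨hm, rfl⟩ | ⟨hm, hr, hpre, hmax⟩
  · exact (projF_of_mem hm).symm
  · exact pref_antisymm (projF_off_max hp hm hr hpre)
      (hmax _ (projF_off_range hm) (projF_off_prefix hp hm))

lemma projF_mem_S (hp : IsEnd T p) (w : Word) : projF T p w ∈ endTree T p := by
  by_cases h : w ∈ endTree T p
  · rw [projF_of_mem h]; exact h
  · exact range_sub_S (projF_off_range h)

/-- if `a` is off and `par a ∈ endTree` then `par a ∈ range p`. -/
lemma par_range_of_off (hT : IsTree T) (hp : IsEnd T p) {a : Word} (ha : a ∈ T)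
    (haS : a ∉ endTree T p) (hb : par a ∈ endTree T p) : par a ∈ Set.range p := by
  rcases hb with hr | ⟨_, w₁, hw₁T, hw₁pre, hw₁r, hparr, hfin⟩
  · exact hr
  · exact absurd (Or.inr ⟨ha, w₁, hw₁T, hw₁pre.trans (List.dropLast_prefix a), hw₁r, hparr, hfin⟩) haS

lemma projF_step (hT : IsTree T) (hp : IsEnd T p) {a b : Word} (ha : a ∈ T)
    (haS : a ∉ endTree T p) (hb : b ∈ T) (hab : b = par a ∨ b ∈ desc T a) :
    projF T p b = projF T p a := by
  have har : a ∉ Set.range p := off_not_range haS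
  have h1 : projF T p a <+: a := projF_off_prefix hp haS
  have h2 : projF T p a ≠ a := fun h => har (h ▸ projF_off_range haS)
  have h1' : projF T p a <+: a.dropLast := prefix_dropLast h1 h2
  rcases hab with rfl | ⟨_, hpre⟩
  · by_cases hbS : par a ∈ endTree T p
    · have hbr : par a ∈ Set.range p := par_range_of_off hT hp ha haS hbS
      rw [projF_of_mem hbS]
      exact pref_antisymm (projF_off_max hp haS hbr (List.dropLast_prefix a)) h1'
    · exact pref_antisymm
        (projF_off_max hp haS (projF_off_range hbS)
          ((projF_off_prefix hp hbS).trans (List.dropLast_prefix a)))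
        (projF_off_max hp hbS (projF_off_range haS) h1')
  · have hbS : b ∉ endTree T p := off_desc_off hp ha haS hb hpre
    have h3 : projF T p b <+: a := by
      rcases List.prefix_or_prefix_of_prefix (projF_off_prefix hp hbS) hpre with h | h
      · exact h
      · exact absurd (range_closed hp h (projF_off_range hbS)) har
    exact pref_antisymm
      (projF_off_max hp haS (projF_off_range hbS) h3)
      (projF_off_max hp hbS (projF_off_range haS) (h1.trans hpre))

variable {T : Set Word} {p : ℕ → Word} {U : Word → Word → ℝ}
-- ### fiber machinery
lemma fib_summable (hM : IsTransMatrix T U) {u : Word} (hu : u ∈ T) (v : Word) :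
    Summable (fun w : {w : Word // w ∈ T ∧ projTo T p w v} => U u (w : Word)) := by
  have h : Summable (fun w : {w : Word // w ∈ T} => U u (w : Word)) := (hM.2 u hu).summable
  refine h.comp_injective (i := fun w : {w : Word // w ∈ T ∧ projTo T p w v} => (⟨w.1, w.2.1⟩ : {w : Word // w ∈ T})) ?_
  intro a b hab
  exact Subtype.ext (Subtype.mk_eq_mk.mp hab)

noncomputable def sigEq (T : Set Word) (p : ℕ → Word) (hT : IsTree T) (hp : IsEnd T p) :
    (Σ v : endTree T p, {w : Word // w ∈ T ∧ projTo T p w (v : Word)}) ≃ {w : Word // w ∈ T} where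
  toFun x := ⟨x.2.1, x.2.2.1⟩
  invFun w := ⟨⟨projF T p w, projF_mem_S hp w⟩, ⟨w.1, w.2, projTo_projF hp w.2⟩⟩
  left_inv := by
    rintro ⟨⟨v, hv⟩, ⟨w, hw, hpr⟩⟩
    have h : v = projF T p w := projTo_unique hp hpr
    subst h
    rfl
  right_inv := fun w => rfl

lemma hasSum_row (hT : IsTree T) (hp : IsEnd T p) (hM : IsTransMatrix T U) {u : Word}
    (hu : u ∈ T) : HasSum (fun v : endTree T p => projMat T p U u (v : Word)) 1 := by
  have h0 : HasSum (fun w : {w : Word // w ∈ T} => U u (w : Word)) 1 := hM.2 u hu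
  have h1 : HasSum ((fun w : {w : Word // w ∈ T} => U u (w : Word)) ∘ (sigEq T p hT hp)) 1 :=
    ((sigEq T p hT hp).hasSum_iff).mpr h0
  exact h1.sigma (fun v => (fib_summable hM hu (v : Word)).hasSum)

lemma part1_trans (hT : IsTree T) (hp : IsEnd T p) (hM : IsTransMatrix T U) :
    IsTransMatrix (endTree T p) (projMat T p U) := by
  constructor
  · intro u hu v _
    exact tsum_nonneg (fun w => hM.1 u (S_sub hT hp hu) w.1 w.2.1)
  · intro u hu
    exact hasSum_row hT hp hM (S_sub hT hp hu)

lemma exists_pos_of_tsum_pos {ι : Type*} {f : ι → ℝ} (h : 0 < ∑' i, f i)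
    (hnn : ∀ i, 0 ≤ f i) : ∃ i, 0 < f i := by
  by_contra hc
  push_neg at hc
  have : ∀ i, f i = 0 := fun i => le_antisymm (hc i) (hnn i)
  rw [tsum_congr this, tsum_zero] at h
  exact lt_irrefl 0 h

lemma part1_aud (hT : IsTree T) (hp : IsEnd T p) (hM : IsTransMatrix T U) (hA : IsAUD T U) :
    IsAUD (endTree T p) (projMat T p U) := by
  intro u hu v hv hpos
  obtain ⟨⟨w, hwT, hwproj⟩, hwpos⟩ := exists_pos_of_tsum_pos hpos
    (fun w => hM.1 u (S_sub hT hp hu) w.1 w.2.1)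
  have huT : u ∈ T := S_sub hT hp hu
  rcases hA u huT w hwT hwpos with rfl | ⟨_, hupre⟩
  · -- w = par u : then par u ∈ S hence v = w
    have hparS : par u ∈ endTree T p := by
      rcases hu with ⟨k, rfl⟩ | ⟨huT', w₁, hw₁T, hw₁pre, hw₁r, hparr, hfin⟩
      · cases k with
        | zero => rw [hp.1]; exact root_S hp
        | succ n =>
          obtain ⟨_, i, hi⟩ := hp.2 n
          refine range_sub_S ⟨n, ?_⟩
          rw [hi]; exact (List.dropLast_concat).symm
      · rcases eq_or_ne w₁ (u : Word) with rfl | hne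
        · exact range_sub_S hparr
        · refine Or.inr ⟨hT.2.1 u huT' _ (List.dropLast_prefix u), w₁, hw₁T, ?_, hw₁r, hparr, hfin⟩
          exact prefix_dropLast hw₁pre hne
    rcases hwproj with ⟨_, rfl⟩ | ⟨hnm, _⟩
    · exact Or.inl rfl
    · exact absurd hparS hnm
  · -- w descendant of u
    rcases hwproj with ⟨hwS, rfl⟩ | ⟨hwnS, hvr, hvpre, hvmax⟩
    · exact Or.inr ⟨hwS, hupre⟩
    · -- w off
      have hur : u ∈ Set.range p := by
        by_contra hur
        rcases hu with hr | ⟨huT', w₁, hw₁T, hw₁pre, hw₁r, hparr, hfin⟩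
        · exact hur hr
        · exact hwnS (Or.inr ⟨hwT, w₁, hw₁T, hw₁pre.trans hupre, hw₁r, hparr, hfin⟩)
      exact Or.inr ⟨range_sub_S hvr, hvmax u hur hupre⟩

-- ### irreducibility
def Reach (S : Set Word) (V : Word → Word → ℝ) (a b : Word) : Prop :=
  ∃ (n : ℕ) (x : ℕ → Word), x 0 = a ∧ x n = b ∧ (∀ k ≤ n, x k ∈ S) ∧
    ∀ k < n, 0 < V (x k) (x (k + 1))

lemma reach_refl {S : Set Word} {V : Word → Word → ℝ} {a : Word} (ha : a ∈ S) :
    Reach S V a a :=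
  ⟨0, fun _ => a, rfl, rfl, fun _ _ => ha, fun k hk => absurd hk (Nat.not_lt_zero k)⟩

lemma reach_single {S : Set Word} {V : Word → Word → ℝ} {a b : Word} (ha : a ∈ S) (hb : b ∈ S)
    (h : 0 < V a b) : Reach S V a b := by
  refine ⟨1, fun k => if k = 0 then a else b, by simp, by simp, ?_, ?_⟩
  · intro k _
    by_cases h0 : k = 0 <;> simp [h0, ha, hb]
  · intro k hk
    interval_cases k
    simpa using h

lemma reach_trans {S : Set Word} {V : Word → Word → ℝ} {a b c : Word}
    (h1 : Reach S V a b) (h2 : Reach S V b c) : Reach S V a c := by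
  obtain ⟨n, x, hx0, hxn, hxm, hxp⟩ := h1
  obtain ⟨m, y, hy0, hym, hymem, hyp⟩ := h2
  refine ⟨n + m, fun k => if k ≤ n then x k else y (k - n), by simp [hx0], ?_, ?_, ?_⟩
  · by_cases hm : m = 0
    · subst hm; simp [hxn, ← hy0, ← hym]
    · have : ¬ (n + m ≤ n) := by omega
      simp only [this, if_false]
      rw [Nat.add_sub_cancel_left, hym]
  · intro k hk
    by_cases h : k ≤ n
    · simp only [h, if_true]; exact hxm k h
    · simp only [h, if_false]; exact hymem (k - n) (by omega)
  · intro k hk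
    by_cases h : k + 1 ≤ n
    · have h' : k ≤ n := by omega
      simp only [h, h', if_true]
      exact hxp k (by omega)
    · by_cases h' : k ≤ n
      · have hkn : k = n := by omega
        subst hkn
        simp only [h, h', if_true, if_false, Nat.add_sub_cancel_left]
        rw [hxn, ← hy0]
        exact hyp 0 (by omega)
      · simp only [h, h', if_false]
        have : k + 1 - n = (k - n) + 1 := by omega
        rw [this]
        exact hyp (k - n) (by omega)

lemma proj_pos_step (hT : IsTree T) (hp : IsEnd T p) (hM : IsTransMatrix T U) {a b : Word}
    (ha : a ∈ endTree T p) (hb : b ∈ T) (hpos : 0 < U a b) :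
    0 < projMat T p U a (projF T p b) := by
  have haT : a ∈ T := S_sub hT hp ha
  exact Summable.tsum_pos (fib_summable hM haT _) (fun w => hM.1 a haT w.1 w.2.1)
    ⟨b, hb, projTo_projF hp hb⟩ hpos

lemma part1_irr (hT : IsTree T) (hp : IsEnd T p) (hM : IsTransMatrix T U) (hA : IsAUD T U)
    (hI : IrreducibleOn T U) : IrreducibleOn (endTree T p) (projMat T p U) := by
  have key : ∀ u ∈ endTree T p, ∀ v ∈ endTree T p,
      Reach (endTree T p) (projMat T p U) u v := by
    intro u hu v hv
    obtain ⟨n, x, hx0, hxn, hxm, hxp⟩ := hI u (S_sub hT hp hu) v (S_sub hT hp hv)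
    have main : ∀ k ≤ n, Reach (endTree T p) (projMat T p U) (projF T p (x 0)) (projF T p (x k)) := by
      intro k hk
      induction k with
      | zero => exact reach_refl (projF_mem_S hp _)
      | succ j ih =>
        refine reach_trans (ih (by omega)) ?_
        by_cases hS : x j ∈ endTree T p
        · have : projF T p (x j) = x j := projF_of_mem hS
          rw [this]
          exact reach_single hS (projF_mem_S hp _)
            (proj_pos_step hT hp hM hS (hxm (j+1) (by omega)) (hxp j (by omega)))
        · have : projF T p (x (j+1)) = projF T p (x j) :=
            projF_step hT hp (hxm j (by omega)) hS (hxm (j+1) (by omega))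
              (hA (x j) (hxm j (by omega)) (x (j+1)) (hxm (j+1) (by omega)) (hxp j (by omega)))
          rw [this]
          exact reach_refl (projF_mem_S hp _)
    have := main n le_rfl
    rw [hx0, hxn, projF_of_mem hu, projF_of_mem hv] at this
    exact this
  intro u hu v hv
  exact (key u hu v hv).imp (fun n h => h)


-- ### ℝ≥0∞ helpers
lemma tsum_split {α : Type*} (f : α → ℝ≥0∞) (Q : α → Prop) :
    ∑' a, f a = (∑' a : {a // Q a}, f (a : α)) + ∑' a : {a // ¬ Q a}, f (a : α) := by
  have e1 : ∑' a : {a // Q a}, f (a : α) = ∑' x, Set.indicator {a | Q a} f x :=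
    tsum_subtype {a | Q a} f
  have e2 : ∑' a : {a // ¬ Q a}, f (a : α) = ∑' x, Set.indicator {a | ¬ Q a} f x :=
    tsum_subtype {a | ¬ Q a} f
  rw [e1, e2, ← ENNReal.tsum_add]
  refine tsum_congr fun a => ?_
  by_cases h : Q a <;> simp [Set.indicator, h]

lemma tsum_le_iSup_trunc {α : Type*} (f : α → ℝ≥0∞) (m : α → ℕ) :
    ∑' a, f a ≤ ⨆ N : ℕ, ∑' a : {a // m a ≤ N}, f (a : α) := by
  rw [ENNReal.tsum_eq_iSup_sum]
  refine iSup_le fun s => le_iSup_of_le (s.sup m) ?_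
  have h1 : ∑ a ∈ s, f a = ∑ a ∈ s.attach, f a.1 := (Finset.sum_attach s f).symm
  rw [h1]
  have h2 : ∑ a ∈ s.attach, f a.1 =
      ∑ b ∈ s.attach.map ⟨fun x : {x // x ∈ s} => (⟨x.1, Finset.le_sup x.2⟩ : {a // m a ≤ s.sup m}),
        fun x y hxy => Subtype.ext (Subtype.mk_eq_mk.mp hxy)⟩, f b.1 := by
    rw [Finset.sum_map]; rfl
  rw [h2]
  exact ENNReal.sum_le_tsum _

-- ### weights
noncomputable def ewgt (K : Word → Word → ℝ≥0∞) : List Word → ℝ≥0∞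
  | x :: y :: rest => K x y * ewgt K (y :: rest)
  | _ => 1

@[simp] lemma ewgt_nil (K : Word → Word → ℝ≥0∞) : ewgt K [] = 1 := rfl
@[simp] lemma ewgt_single (K : Word → Word → ℝ≥0∞) (x : Word) : ewgt K [x] = 1 := rfl
@[simp] lemma ewgt_cons_cons (K : Word → Word → ℝ≥0∞) (x y : Word) (l : List Word) :
    ewgt K (x :: y :: l) = K x y * ewgt K (y :: l) := rfl

lemma ewgt_cons_append (K : Word → Word → ℝ≥0∞) :
    ∀ (ob : List Word) (a v : Word) (l₂ : List Word),
      ewgt K (a :: (ob ++ v :: l₂)) = ewgt K (a :: (ob ++ [v])) * ewgt K (v :: l₂) := by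
  intro ob
  induction ob with
  | nil => intro a v l₂; simp
  | cons b ob ih =>
    intro a v l₂
    simp only [List.cons_append, ewgt_cons_cons, ih b v l₂, mul_assoc]

-- ### first passage paths
def FPP (A B : Set Word) (w : Word) (γ : List Word) : Prop :=
  ∃ mid z, γ = w :: mid ++ [z] ∧ (∀ x ∈ γ, x ∈ A) ∧ (∀ x ∈ mid, x ∉ B) ∧ z ∈ B

def zOf (γ : List Word) : Word := γ.getLast?.getD []
def midOf (γ : List Word) : List Word := γ.tail.dropLast

lemma fpp_decomp {A B : Set Word} {w : Word} {γ : List Word} (h : FPP A B w γ) :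
    γ = w :: midOf γ ++ [zOf γ] ∧ (∀ x ∈ γ, x ∈ A) ∧ (∀ x ∈ midOf γ, x ∉ B) ∧ zOf γ ∈ B := by
  obtain ⟨mid, z, hγ, hA, hB, hz⟩ := h
  have hmid : midOf γ = mid := by rw [hγ]; simp [midOf]
  have hzof : zOf γ = z := by
    rw [hγ, zOf, show w :: mid ++ [z] = (w :: mid) ++ [z] from rfl, List.getLast?_concat]
    rfl
  rw [hmid, hzof]
  exact ⟨hγ, hA, hB, hz⟩

lemma fpp_length {A B : Set Word} {w : Word} {γ : List Word} (h : FPP A B w γ) :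
    γ.length = (midOf γ).length + 2 := by
  obtain ⟨mid, z, hγ, -⟩ := h
  have hmid : midOf γ = mid := by rw [hγ]; simp [midOf]
  rw [hmid, hγ]; simp

lemma fpp_trunc_le_one {K : Word → Word → ℝ≥0∞} {A B : Set Word}
    (hrow : ∀ a ∈ A, (∑' z : A, K a (z : Word)) ≤ 1) :
    ∀ N : ℕ, ∀ w ∈ A, ∑' γ : {γ : List Word // FPP A B w γ ∧ γ.length ≤ N}, ewgt K (γ : List Word) ≤ 1 := by
  intro N
  induction N with
  | zero =>
    intro w _
    haveI : IsEmpty {γ : List Word // FPP A B w γ ∧ γ.length ≤ 0} :=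
      ⟨fun γ => by have h := fpp_length γ.2.1; have h2 := γ.2.2; omega⟩
    simp
  | succ N ih =>
    intro w hw
    rw [tsum_split (f := fun γ : {γ : List Word // FPP A B w γ ∧ γ.length ≤ N + 1} =>
      ewgt K (γ : List Word)) (Q := fun γ => (γ : List Word).length = 2)]
    have bA : (∑' γ : {γ : {γ : List Word // FPP A B w γ ∧ γ.length ≤ N+1} // (γ : List Word).length = 2},
        ewgt K (γ : List Word)) ≤ ∑' z : {z : {x // x ∈ A} // (z : Word) ∈ B}, K w (z : Word) := by
      have hmap : ∀ γ : {γ : {γ : List Word // FPP A B w γ ∧ γ.length ≤ N+1} // (γ : List Word).length = 2},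
          (γ : List Word) = [w, zOf (γ : List Word)] ∧ zOf (γ : List Word) ∈ B ∧ zOf (γ : List Word) ∈ A := by
        intro γ
        obtain ⟨hγ, hA, hB, hz⟩ := fpp_decomp γ.1.2.1
        have hlen := fpp_length γ.1.2.1
        set z := zOf (γ : List Word) with hzdef
        set md := midOf (γ : List Word) with hmddef
        have hml : md = [] := by
          have := γ.2; rw [← List.length_eq_zero_iff]; omega
        rw [hml] at hγ
        refine ⟨by simpa using hγ, hz, hA _ ?_⟩
        rw [hγ]; simp
      set i : {γ : {γ : List Word // FPP A B w γ ∧ γ.length ≤ N+1} // (γ : List Word).length = 2} →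
          {z : {x // x ∈ A} // (z : Word) ∈ B} :=
        fun γ => ⟨⟨zOf (γ : List Word), (hmap γ).2.2⟩, (hmap γ).2.1⟩ with hi
      have hinj : Function.Injective i := by
        intro γ₁ γ₂ h
        have h1 := (hmap γ₁).1
        have h2 := (hmap γ₂).1
        have : zOf (γ₁ : List Word) = zOf (γ₂ : List Word) := by
          simpa [hi, Subtype.ext_iff] using h
        ext1; ext1
        rw [h1, h2, this]
      calc ∑' γ : {γ : {γ : List Word // FPP A B w γ ∧ γ.length ≤ N+1} // (γ : List Word).length = 2},
            ewgt K (γ : List Word)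
          = ∑' γ, K w ((i γ : {x // x ∈ A}) : Word) := by
            refine tsum_congr fun γ => ?_
            rw [(hmap γ).1]; simp [hi]
        _ ≤ _ := ENNReal.tsum_comp_le_tsum_of_injective hinj _
    have bB : (∑' γ : {γ : {γ : List Word // FPP A B w γ ∧ γ.length ≤ N+1} // ¬ (γ : List Word).length = 2},
        ewgt K (γ : List Word)) ≤ ∑' z : {z : {x // x ∈ A} // ¬ (z : Word) ∈ B}, K w (z : Word) := by
      -- decompose γ = w :: w' :: rest
      have hmap : ∀ γ : {γ : {γ : List Word // FPP A B w γ ∧ γ.length ≤ N+1} // ¬ (γ : List Word).length = 2},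
          ∃ (w' : Word) (m' : List Word),
            (γ : List Word) = w :: w' :: (m' ++ [zOf (γ : List Word)]) ∧ w' ∈ A ∧ w' ∉ B ∧
            FPP A B w' ((γ : List Word).tail) ∧ ((γ : List Word).tail).length ≤ N ∧
            (γ : List Word).tail = w' :: (m' ++ [zOf (γ : List Word)]) := by
        intro γ
        obtain ⟨hγ, hA, hB, hz⟩ := fpp_decomp γ.1.2.1
        have hlen := fpp_length γ.1.2.1
        have hlen2 := γ.1.2.2
        set z := zOf (γ : List Word) with hzdef
        set md := midOf (γ : List Word) with hmddef
        have hml : md.length ≠ 0 := fun h0 => γ.2 (by omega)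
        obtain ⟨w', m', hm⟩ : ∃ w' m', md = w' :: m' := by
          cases hmd : md with
          | nil => exact absurd (by rw [hmd]; rfl) hml
          | cons a b => exact ⟨a, b, rfl⟩
        have hγ' : (γ : List Word) = w :: w' :: (m' ++ [z]) := by
          rw [hγ, hm]; rfl
        have htail : (γ : List Word).tail = w' :: (m' ++ [z]) := by
          rw [hγ']; rfl
        have hw'B : w' ∉ B := hB w' (by rw [hm]; exact List.mem_cons_self)
        have hw'A : w' ∈ A := hA w' (by rw [hγ']; simp)
        refine ⟨w', m', hγ', hw'A, hw'B, ?_, ?_, htail⟩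
        · refine ⟨m', z, htail, ?_, ?_, hz⟩
          · intro x hx
            refine hA x ?_
            rw [hγ']
            rw [htail] at hx
            exact List.mem_cons_of_mem _ hx
          · intro x hx
            exact hB x (by rw [hm]; exact List.mem_cons_of_mem _ hx)
        · have : (γ : List Word).tail.length + 1 = (γ : List Word).length := by
            rw [hγ']; rfl
          omega
      set i : {γ : {γ : List Word // FPP A B w γ ∧ γ.length ≤ N+1} // ¬ (γ : List Word).length = 2} →
          Σ z : {z : {x // x ∈ A} // ¬ (z : Word) ∈ B}, {γ' : List Word // FPP A B ((z : {x // x ∈ A}) : Word) γ' ∧ γ'.length ≤ N} :=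
        fun γ => ⟨⟨⟨(γ : List Word).tail.headD [], by
            obtain ⟨w', m', h1, h2, h3, h4, h5, h6⟩ := hmap γ; simp only [h6]; simpa using h2⟩, by
            obtain ⟨w', m', h1, h2, h3, h4, h5, h6⟩ := hmap γ; simp only [h6]; simpa using h3⟩,
          ⟨(γ : List Word).tail, by
            obtain ⟨w', m', h1, h2, h3, h4, h5, h6⟩ := hmap γ
            have hh : (γ : List Word).tail.headD [] = w' := by simp only [h6]; rfl
            refine ⟨?_, h5⟩
            show FPP A B ((γ : List Word).tail.headD []) ((γ : List Word).tail)
            rw [hh]; exact h4⟩⟩ with hi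
      have hinj : Function.Injective i := by
        intro γ₁ γ₂ h
        have ht : (γ₁ : List Word).tail = (γ₂ : List Word).tail :=
          congrArg (fun s : (Σ z : {z : {x // x ∈ A} // ¬ (z : Word) ∈ B},
            {γ' : List Word // FPP A B ((z : {x // x ∈ A}) : Word) γ' ∧ γ'.length ≤ N}) =>
            (s.2 : List Word)) h
        obtain ⟨w₁, m₁, h11, -, -, -, -, h16⟩ := hmap γ₁
        obtain ⟨w₂, m₂, h21, -, -, -, -, h26⟩ := hmap γ₂
        have e1 : (γ₁ : List Word) = w :: (γ₁ : List Word).tail := by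
          conv_lhs => rw [h11]
          rw [h16]
        have e2 : (γ₂ : List Word) = w :: (γ₂ : List Word).tail := by
          conv_lhs => rw [h21]
          rw [h26]
        ext1; ext1
        rw [e1, e2, ht]
      calc (∑' γ : {γ : {γ : List Word // FPP A B w γ ∧ γ.length ≤ N+1} // ¬ (γ : List Word).length = 2},
            ewgt K (γ : List Word))
          = ∑' γ, (fun s : Σ z : {z : {x // x ∈ A} // ¬ (z : Word) ∈ B},
              {γ' : List Word // FPP A B ((z : {x // x ∈ A}) : Word) γ' ∧ γ'.length ≤ N} =>
              K w ((s.1 : {x // x ∈ A}) : Word) * ewgt K (s.2 : List Word)) (i γ) := by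
            refine tsum_congr fun γ => ?_
            obtain ⟨w', m', h1, h2, h3, h4, h5, h6⟩ := hmap γ
            show ewgt K (γ : List Word) =
              K w ((γ : List Word).tail.headD []) * ewgt K ((γ : List Word).tail)
            have hh : (γ : List Word).tail.headD [] = w' := by simp only [h6]; rfl
            rw [hh, h6]
            conv_lhs => rw [h1]
            rfl
        _ ≤ ∑' s : Σ z : {z : {x // x ∈ A} // ¬ (z : Word) ∈ B},
              {γ' : List Word // FPP A B ((z : {x // x ∈ A}) : Word) γ' ∧ γ'.length ≤ N},
              K w ((s.1 : {x // x ∈ A}) : Word) * ewgt K (s.2 : List Word) :=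
            ENNReal.tsum_comp_le_tsum_of_injective hinj _
        _ = ∑' z : {z : {x // x ∈ A} // ¬ (z : Word) ∈ B},
              ∑' γ' : {γ' : List Word // FPP A B ((z : {x // x ∈ A}) : Word) γ' ∧ γ'.length ≤ N},
              K w ((z : {x // x ∈ A}) : Word) * ewgt K (γ' : List Word) := ENNReal.tsum_sigma' _
        _ = ∑' z : {z : {x // x ∈ A} // ¬ (z : Word) ∈ B},
              K w ((z : {x // x ∈ A}) : Word) *
              ∑' γ' : {γ' : List Word // FPP A B ((z : {x // x ∈ A}) : Word) γ' ∧ γ'.length ≤ N},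
              ewgt K (γ' : List Word) := by
            refine tsum_congr fun z => ?_
            rw [ENNReal.tsum_mul_left]
        _ ≤ ∑' z : {z : {x // x ∈ A} // ¬ (z : Word) ∈ B}, K w ((z : {x // x ∈ A}) : Word) * 1 := by
            refine ENNReal.tsum_le_tsum fun z => ?_
            exact mul_le_mul_right (ih ((z : {x // x ∈ A}) : Word) (z : {x // x ∈ A}).2) _
        _ = _ := by simp
    calc (∑' γ : {γ : {γ : List Word // FPP A B w γ ∧ γ.length ≤ N+1} // (γ : List Word).length = 2},
            ewgt K (γ : List Word)) +
          ∑' γ : {γ : {γ : List Word // FPP A B w γ ∧ γ.length ≤ N+1} // ¬ (γ : List Word).length = 2},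
            ewgt K (γ : List Word)
        ≤ (∑' z : {z : {x // x ∈ A} // (z : Word) ∈ B}, K w (z : Word)) +
          ∑' z : {z : {x // x ∈ A} // ¬ (z : Word) ∈ B}, K w (z : Word) := add_le_add bA bB
      _ = ∑' z : {x // x ∈ A}, K w (z : Word) := by
          rw [← tsum_split (fun z : {x // x ∈ A} => K w (z : Word)) (fun z => (z : Word) ∈ B)]
      _ ≤ 1 := hrow w hw

lemma fpp_le_one {K : Word → Word → ℝ≥0∞} {A B : Set Word}
    (hrow : ∀ a ∈ A, (∑' z : A, K a (z : Word)) ≤ 1) {w : Word} (hw : w ∈ A) :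
    ∑' γ : {γ : List Word // FPP A B w γ}, ewgt K (γ : List Word) ≤ 1 := by
  refine le_trans (tsum_le_iSup_trunc (f := fun γ : {γ : List Word // FPP A B w γ} =>
    ewgt K (γ : List Word)) (fun γ => (γ : List Word).length)) (iSup_le fun N => ?_)
  refine le_trans ?_ (fpp_trunc_le_one (B := B) hrow N w hw)
  have hinj : Function.Injective (fun γ : {γ : {γ : List Word // FPP A B w γ} // (γ : List Word).length ≤ N} =>
      (⟨(γ : List Word), γ.1.2, γ.2⟩ : {γ : List Word // FPP A B w γ ∧ γ.length ≤ N})) := by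
    intro a b h
    ext1; ext1
    exact Subtype.mk_eq_mk.mp h
  exact le_trans (le_of_eq (tsum_congr fun γ => rfl))
    (ENNReal.tsum_comp_le_tsum_of_injective hinj (fun γ => ewgt K (γ : List Word)))


lemma isLoop_iff {C : Set Word} {γ : List Word} :
    IsLoop C γ ↔ ∃ mid, γ = ([] : Word) :: mid ++ [([] : Word)] ∧ (∀ x ∈ γ, x ∈ C) ∧
      ∀ x ∈ mid, x ≠ ([] : Word) := by
  constructor
  · rintro ⟨h2, hh, hl, hmem, hint⟩
    have hne : γ ≠ [] := by intro h; rw [h] at h2; simp at h2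
    obtain ⟨a, t, rfl⟩ : ∃ a t, γ = a :: t := ⟨γ.head hne, γ.tail, (List.cons_head_tail hne).symm⟩
    have ha : a = [] := by simpa using hh
    have htne : t ≠ [] := by intro h; subst h; simp at h2
    obtain ⟨mid, z, hmz⟩ : ∃ mid z, t = mid ++ [z] :=
      ⟨t.dropLast, t.getLast htne, (List.dropLast_append_getLast htne).symm⟩
    have hz : z = [] := by
      have h3 : (a :: t).getLast? = some z := by
        rw [hmz, show a :: (mid ++ [z]) = (a :: mid) ++ [z] from rfl, List.getLast?_concat]
      rw [hl] at h3
      exact (Option.some_inj.mp h3).symm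
    have hlen : (a :: t).length = mid.length + 2 := by rw [hmz]; simp
    refine ⟨mid, by rw [ha, hmz, hz]; simp, hmem, ?_⟩
    intro x hx
    obtain ⟨k, hk, hkx⟩ := List.mem_iff_getElem.mp hx
    have hget : (a :: t).getD (k+1) [] = x := by
      rw [List.getD_cons_succ, hmz, List.getD_append _ _ _ _ hk, List.getD_eq_getElem _ _ hk, hkx]
    have := hint (k+1) (by omega) (by omega)
    rw [hget] at this
    exact this
  · rintro ⟨mid, rfl, hmem, hmid⟩
    have hlen : (([] : Word) :: mid ++ [([] : Word)]).length = mid.length + 2 := by simp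
    refine ⟨by omega, rfl, ?_, hmem, ?_⟩
    · rw [List.getLast?_concat]
    · intro k hk0 hklt
      obtain ⟨j, rfl⟩ : ∃ j, k = j + 1 := ⟨k - 1, by omega⟩
      have hj : j < mid.length := by omega
      have hj2 : j + 1 < (([] : Word) :: mid).length := by simpa using by omega
      rw [List.getD_append _ _ _ _ hj2, List.getD_cons_succ, List.getD_eq_getElem _ _ hj]
      exact hmid _ (List.getElem_mem hj)

noncomputable def filtS (S : Set Word) (l : List Word) : List Word :=
  l.filter (fun x => decide (x ∈ S))

lemma filtS_mem {S : Set Word} {l : List Word} {x : Word} (h : x ∈ filtS S l) : x ∈ S := by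
  rw [filtS, List.mem_filter] at h
  exact of_decide_eq_true h.2

lemma filtS_subset {S : Set Word} {l : List Word} {x : Word} (h : x ∈ filtS S l) : x ∈ l := by
  rw [filtS, List.mem_filter] at h
  exact h.1

lemma filtS_cons_mem {S : Set Word} {l : List Word} {x : Word} (h : x ∈ S) :
    filtS S (x :: l) = x :: filtS S l := by
  rw [filtS, List.filter_cons, if_pos (by simpa using h)]
  rfl

lemma filtS_cons_not_mem {S : Set Word} {l : List Word} {x : Word} (h : x ∉ S) :
    filtS S (x :: l) = filtS S l := by
  rw [filtS, List.filter_cons, if_neg (by simpa using h)]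
  rfl

lemma filtS_append (S : Set Word) (l₁ l₂ : List Word) :
    filtS S (l₁ ++ l₂) = filtS S l₁ ++ filtS S l₂ := List.filter_append _ _

lemma filtS_nil (S : Set Word) : filtS S [] = [] := rfl

lemma filter_split {S : Set Word} : ∀ {l v δ}, filtS S l = v :: δ →
    ∃ ob t, l = ob ++ v :: t ∧ (∀ x ∈ ob, x ∉ S) ∧ filtS S t = δ := by
  intro l
  induction l with
  | nil => intro v δ h; simp [filtS_nil] at h
  | cons x l ih =>
    intro v δ h
    by_cases hx : x ∈ S
    · rw [filtS_cons_mem hx] at h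
      obtain ⟨rfl, rfl⟩ : x = v ∧ filtS S l = δ := ⟨(List.cons_eq_cons.mp h).1, (List.cons_eq_cons.mp h).2⟩
      exact ⟨[], l, rfl, by simp, rfl⟩
    · rw [filtS_cons_not_mem hx] at h
      obtain ⟨ob, t, rfl, hob, ht⟩ := ih h
      refine ⟨x :: ob, t, rfl, ?_, ht⟩
      intro y hy
      rcases List.mem_cons.mp hy with h' | h'
      · rw [h']; exact hx
      · exact hob y h'

lemma filtS_all_not {S : Set Word} {l : List Word} (h : ∀ x ∈ l, x ∉ S) : filtS S l = [] := by
  induction l with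
  | nil => rfl
  | cons x l ih =>
    rw [filtS_cons_not_mem (h x (List.mem_cons_self))]
    exact ih fun y hy => h y (List.mem_cons_of_mem _ hy)

variable {T : Set Word} {p : ℕ → Word} {U : Word → Word → ℝ}
-- prior results as axioms (merged later)
-- ### begin chunk 6
lemma filtS_nil_all {S : Set Word} {l : List Word} (h : filtS S l = []) :
    ∀ x ∈ l, x ∉ S := by
  intro x hx hxS
  have : x ∈ filtS S l := by
    rw [filtS, List.mem_filter]
    exact ⟨hx, by simpa using hxS⟩
  rw [h] at this
  simp at this

lemma getLast?_append_ne {l₁ l₂ : List Word} (h : l₂ ≠ []) :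
    (l₁ ++ l₂).getLast? = l₂.getLast? := by
  cases h2 : l₂.getLast? with
  | none => exact absurd (List.getLast?_eq_none_iff.mp h2) h
  | some y => rw [List.getLast?_append, h2]; rfl

noncomputable def eK (M : Word → Word → ℝ) (a b : Word) : ℝ≥0∞ := ENNReal.ofReal (M a b)

noncomputable def eV (T : Set Word) (p : ℕ → Word) (U : Word → Word → ℝ) (a v : Word) : ℝ≥0∞ :=
  ∑' w : {w : Word // w ∈ T ∧ projTo T p w v}, eK U a (w : Word)

@[simp] lemma wgt_nil (M : Word → Word → ℝ) : wgt M [] = 1 := rfl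
@[simp] lemma wgt_single (M : Word → Word → ℝ) (x : Word) : wgt M [x] = 1 := rfl
@[simp] lemma wgt_cons_cons (M : Word → Word → ℝ) (x y : Word) (l : List Word) :
    wgt M (x :: y :: l) = M x y * wgt M (y :: l) := rfl

lemma wgt_nonneg {M : Word → Word → ℝ} {C : Set Word} (hnn : ∀ a ∈ C, ∀ b ∈ C, 0 ≤ M a b) :
    ∀ l : List Word, (∀ x ∈ l, x ∈ C) → 0 ≤ wgt M l := by
  intro l
  induction l with
  | nil => intro _; norm_num
  | cons x t ih =>
    intro hmem
    cases t with
    | nil => norm_num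
    | cons y r =>
      rw [wgt_cons_cons]
      have hx : x ∈ C := hmem x (by simp)
      have hy : y ∈ C := hmem y (by simp)
      exact mul_nonneg (hnn x hx y hy) (ih fun z hz => hmem z (List.mem_cons_of_mem _ hz))

lemma ewgt_eq {M : Word → Word → ℝ} {C : Set Word} (hnn : ∀ a ∈ C, ∀ b ∈ C, 0 ≤ M a b) :
    ∀ l : List Word, (∀ x ∈ l, x ∈ C) → ENNReal.ofReal (wgt M l) = ewgt (eK M) l := by
  intro l
  induction l with
  | nil => intro _; simp
  | cons x t ih =>
    intro hmem
    cases t with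
    | nil => simp
    | cons y r =>
      rw [wgt_cons_cons, ewgt_cons_cons,
        ENNReal.ofReal_mul (hnn x (hmem x (by simp)) y (hmem y (by simp)))]
      rw [ih fun z hz => hmem z (List.mem_cons_of_mem _ hz)]
      rfl

lemma ewgt_congr {K K' : Word → Word → ℝ≥0∞} {C : Set Word}
    (h : ∀ a ∈ C, ∀ b ∈ C, K a b = K' a b) :
    ∀ l : List Word, (∀ x ∈ l, x ∈ C) → ewgt K l = ewgt K' l := by
  intro l
  induction l with
  | nil => intro _; simp
  | cons x t ih =>
    intro hmem
    cases t with
    | nil => simp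
    | cons y r =>
      rw [ewgt_cons_cons, ewgt_cons_cons, h x (hmem x (by simp)) y (hmem y (by simp)),
        ih fun z hz => hmem z (List.mem_cons_of_mem _ hz)]

lemma eU_row (hM : IsTransMatrix T U) {a : Word} (ha : a ∈ T) :
    ∑' w : {w : Word // w ∈ T}, eK U a (w : Word) = 1 := by
  have h0 : ∀ w : {w : Word // w ∈ T}, 0 ≤ U a (w : Word) := fun w => hM.1 a ha w w.2
  rw [show (fun w : {w : Word // w ∈ T} => eK U a (w : Word)) =
    (fun w : {w : Word // w ∈ T} => ENNReal.ofReal (U a (w : Word))) from rfl]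
  rw [← ENNReal.ofReal_tsum_of_nonneg h0 (hM.2 a ha).summable, (hM.2 a ha).tsum_eq]
  exact ENNReal.ofReal_one

lemma eV_eq (hM : IsTransMatrix T U) {a : Word} (ha : a ∈ T) (v : Word) :
    eV T p U a v = ENNReal.ofReal (projMat T p U a v) := by
  have h := ENNReal.ofReal_tsum_of_nonneg
    (f := fun w : {w : Word // w ∈ T ∧ projTo T p w v} => U a (w : Word))
    (fun w => hM.1 a ha w.1 w.2.1) (fib_summable (p := p) hM ha v)
  exact h.symm

lemma projMat_nonneg (hM : IsTransMatrix T U) {a : Word} (ha : a ∈ T) (v : Word) :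
    0 ≤ projMat T p U a v :=
  tsum_nonneg fun w => hM.1 a ha w.1 w.2.1

lemma eV_row (hT : IsTree T) (hp : IsEnd T p) (hM : IsTransMatrix T U) {a : Word}
    (ha : a ∈ T) : ∑' v : endTree T p, eV T p U a (v : Word) = 1 := by
  have h1 : ∀ v : endTree T p, eV T p U a (v : Word) =
      ENNReal.ofReal (projMat T p U a (v : Word)) := fun v => eV_eq hM ha _
  rw [tsum_congr h1]
  have h2 := ENNReal.ofReal_tsum_of_nonneg
    (f := fun v : endTree T p => projMat T p U a (v : Word))
    (fun v => projMat_nonneg hM ha _) (hasSum_row hT hp hM ha).summable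
  rw [← h2, (hasSum_row hT hp hM ha).tsum_eq]
  exact ENNReal.ofReal_one

lemma eK_ne_zero {M : Word → Word → ℝ} {a b : Word} (h : eK M a b ≠ 0) : 0 < M a b := by
  rw [eK, ne_eq, ENNReal.ofReal_eq_zero] at h
  linarith [not_le.mp h]

lemma chain_zero (hT : IsTree T) (hp : IsEnd T p) (hA : IsAUD T U) {v : Word} (hv : v ∈ T) :
    ∀ (ob : List Word) (w : Word), w ∈ T → w ∉ endTree T p →
      (∀ x ∈ ob, x ∈ T ∧ x ∉ endTree T p) →
      ewgt (eK U) (w :: ob ++ [v]) ≠ 0 → projF T p v = projF T p w := by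
  intro ob
  induction ob with
  | nil =>
    intro w hwT hwS _ hne
    have h1 : eK U w v ≠ 0 := by
      intro h0
      apply hne
      show ewgt (eK U) (w :: [] ++ [v]) = 0
      rw [show w :: [] ++ [v] = [w, v] from rfl, ewgt_cons_cons, h0, zero_mul]
    exact projF_step hT hp hwT hwS hv (hA w hwT v hv (eK_ne_zero h1))
  | cons b ob ih =>
    intro w hwT hwS hob hne
    have hbT : b ∈ T := (hob b (by simp)).1
    have hbS : b ∉ endTree T p := (hob b (by simp)).2
    have hsplit : eK U w b ≠ 0 ∧ ewgt (eK U) (b :: ob ++ [v]) ≠ 0 := by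
      rw [show w :: (b :: ob) ++ [v] = w :: b :: (ob ++ [v]) from rfl, ewgt_cons_cons] at hne
      exact mul_ne_zero_iff.mp hne
    have h1 : projF T p b = projF T p w :=
      projF_step hT hp hwT hwS hbT (hA w hwT b hbT (eK_ne_zero hsplit.1))
    have h2 : projF T p v = projF T p b :=
      ih b hbT hbS (fun x hx => hob x (List.mem_cons_of_mem _ hx)) hsplit.2
    rw [h2, h1]

lemma seg (hT : IsTree T) (hp : IsEnd T p) (hM : IsTransMatrix T U) (hA : IsAUD T U)
    {a v : Word} (ha : a ∈ T) (hv : v ∈ endTree T p) :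
    ∑' ob : {l : List Word // ∀ x ∈ l, x ∈ T ∧ x ∉ endTree T p},
      ewgt (eK U) (a :: (ob : List Word) ++ [v]) ≤ eV T p U a v := by
  have hvT : v ∈ T := S_sub hT hp hv
  rw [tsum_split (f := fun ob : {l : List Word // ∀ x ∈ l, x ∈ T ∧ x ∉ endTree T p} =>
    ewgt (eK U) (a :: (ob : List Word) ++ [v])) (Q := fun ob => (ob : List Word) = [])]
  -- the empty-ob part equals eK U a v
  have p1 : (∑' ob : {ob : {l : List Word // ∀ x ∈ l, x ∈ T ∧ x ∉ endTree T p} // (ob : List Word) = []},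
      ewgt (eK U) (a :: ((ob : {l : List Word // ∀ x ∈ l, x ∈ T ∧ x ∉ endTree T p}) : List Word) ++ [v])) = eK U a v := by
    rw [tsum_eq_single (⟨⟨[], by simp⟩, rfl⟩ :
        {ob : {l : List Word // ∀ x ∈ l, x ∈ T ∧ x ∉ endTree T p} // (ob : List Word) = []})
      (fun b hb => absurd (Subtype.ext (Subtype.ext b.2)) hb)]
    show ewgt (eK U) (a :: [] ++ [v]) = eK U a v
    rw [show a :: [] ++ [v] = [a, v] from rfl, ewgt_cons_cons, ewgt_single, mul_one]
  rw [p1]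
  -- the nonempty part
  set OffT := {w : Word // w ∈ T ∧ w ∉ endTree T p} with hOffT
  set OffL := {l : List Word // ∀ x ∈ l, x ∈ T ∧ x ∉ endTree T p} with hOffL
  have p2 : (∑' ob : {ob : OffL // ¬ (ob : List Word) = []},
      ewgt (eK U) (a :: ((ob : OffL) : List Word) ++ [v])) ≤
      ∑' x : {x : {w : Word // w ∈ T ∧ projTo T p w v} // ¬ (x : Word) = v},
        eK U a (((x : {w : Word // w ∈ T ∧ projTo T p w v})) : Word) := by
    set i : {ob : OffL // ¬ (ob : List Word) = []} → Σ w : OffT, OffL :=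
      fun ob => ⟨⟨((ob : OffL) : List Word).head ob.2,
          ⟨(((ob : OffL)).2 _ (List.head_mem ob.2)).1, (((ob : OffL)).2 _ (List.head_mem ob.2)).2⟩⟩,
        ⟨((ob : OffL) : List Word).tail,
          fun x hx => ((ob : OffL)).2 x (List.mem_of_mem_tail hx)⟩⟩ with hi
    have hinj : Function.Injective i := by
      intro o₁ o₂ h
      have hw : ((o₁ : OffL) : List Word).head o₁.2 = ((o₂ : OffL) : List Word).head o₂.2 :=
        congrArg (fun s : Σ w : OffT, OffL => ((s.1 : Word))) h
      have ht : ((o₁ : OffL) : List Word).tail = ((o₂ : OffL) : List Word).tail :=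
        congrArg (fun s : Σ w : OffT, OffL => ((s.2 : List Word))) h
      ext1; ext1
      rw [← List.cons_head_tail o₁.2, ← List.cons_head_tail o₂.2, hw, ht]
    calc (∑' ob : {ob : OffL // ¬ (ob : List Word) = []},
          ewgt (eK U) (a :: ((ob : OffL) : List Word) ++ [v]))
        = ∑' ob : {ob : OffL // ¬ (ob : List Word) = []},
            (fun s : Σ w : OffT, OffL =>
              eK U a (s.1 : Word) * ewgt (eK U) ((s.1 : Word) :: (s.2 : List Word) ++ [v])) (i ob) := by
          refine tsum_congr fun ob => ?_
          have hdec : ((ob : OffL) : List Word) =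
              ((ob : OffL) : List Word).head ob.2 :: ((ob : OffL) : List Word).tail :=
            (List.cons_head_tail ob.2).symm
          simp only [hi]
          conv_lhs => rw [hdec]
          rw [show (((ob : OffL) : List Word).head ob.2 :: ((ob : OffL) : List Word).tail) =
            (((ob : OffL) : List Word).head ob.2) :: (((ob : OffL) : List Word).tail) from rfl]
          rw [show a :: ((((ob : OffL) : List Word).head ob.2) :: (((ob : OffL) : List Word).tail)) ++ [v]
            = a :: (((ob : OffL) : List Word).head ob.2) :: ((((ob : OffL) : List Word).tail) ++ [v]) from rfl]
          rw [ewgt_cons_cons]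
          rfl
      _ ≤ ∑' s : Σ w : OffT, OffL,
            eK U a (s.1 : Word) * ewgt (eK U) ((s.1 : Word) :: (s.2 : List Word) ++ [v]) :=
          ENNReal.tsum_comp_le_tsum_of_injective hinj _
      _ = ∑' w : OffT, ∑' ob : OffL,
            eK U a (w : Word) * ewgt (eK U) ((w : Word) :: (ob : List Word) ++ [v]) :=
          ENNReal.tsum_sigma' _
      _ = ∑' w : OffT, eK U a (w : Word) *
            ∑' ob : OffL, ewgt (eK U) ((w : Word) :: (ob : List Word) ++ [v]) := by
          refine tsum_congr fun w => ?_
          rw [ENNReal.tsum_mul_left]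
      _ ≤ ∑' w : OffT, (if projF T p (w : Word) = v then eK U a (w : Word) else 0) := by
          refine ENNReal.tsum_le_tsum fun w => ?_
          by_cases hc : projF T p (w : Word) = v
          · rw [if_pos hc]
            have hZ : (∑' ob : OffL, ewgt (eK U) ((w : Word) :: (ob : List Word) ++ [v])) ≤ 1 := by
              have hmemall : ∀ ob : OffL, ∀ x ∈ (w : Word) :: (ob : List Word) ++ [v], x ∈ T := by
                intro ob x hx
                rcases List.mem_cons.mp hx with rfl | hx'
                · exact w.2.1
                · rcases List.mem_append.mp hx' with hx'' | hx''
                  · exact (ob.2 x hx'').1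
                  · rw [List.mem_singleton.mp hx'']; exact hvT
              set j : OffL → {γ : List Word // FPP T (endTree T p) (w : Word) γ} :=
                fun ob => ⟨(w : Word) :: (ob : List Word) ++ [v],
                  ⟨(ob : List Word), v, rfl, hmemall ob, fun x hx => (ob.2 x hx).2, hv⟩⟩ with hj
              have hjinj : Function.Injective j := by
                intro o₁ o₂ h
                have := congrArg (fun s : {γ : List Word // FPP T (endTree T p) (w : Word) γ} => (s : List Word)) h
                simp only [hj] at this
                ext1
                have h2 := List.cons_injective this
                exact List.append_cancel_right h2
              refine le_trans (le_of_eq (tsum_congr fun ob => rfl))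
                (le_trans (ENNReal.tsum_comp_le_tsum_of_injective hjinj
                  (fun γ => ewgt (eK U) (γ : List Word))) ?_)
              exact fpp_le_one (fun b hb => le_of_eq (eU_row hM hb)) w.2.1
            calc eK U a (w : Word) * ∑' ob : OffL, ewgt (eK U) ((w : Word) :: (ob : List Word) ++ [v])
                ≤ eK U a (w : Word) * 1 := mul_le_mul_right hZ _
              _ = eK U a (w : Word) := mul_one _
          · rw [if_neg hc]
            have hZ0 : (∑' ob : OffL, ewgt (eK U) ((w : Word) :: (ob : List Word) ++ [v])) = 0 := by
              rw [tsum_congr (fun ob => ?_), tsum_zero]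
              by_contra hne
              exact hc ((chain_zero hT hp hA hvT (ob : List Word) (w : Word) w.2.1 w.2.2 ob.2 hne).symm.trans
                (projF_of_mem hv))
            rw [hZ0, mul_zero]
      _ = ∑' w : {x : OffT // projF T p (x : Word) = v}, eK U a ((w : OffT) : Word) := by
          rw [tsum_split (f := fun w : OffT => (if projF T p (w : Word) = v then eK U a (w : Word) else 0))
            (Q := fun w : OffT => projF T p (w : Word) = v)]
          have e1 : (∑' w : {x : OffT // ¬ projF T p (x : Word) = v},
              (if projF T p ((w : OffT) : Word) = v then eK U a ((w : OffT) : Word) else 0)) = 0 := by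
            rw [tsum_congr (fun w => if_neg w.2), tsum_zero]
          rw [e1, add_zero]
          exact tsum_congr fun w => if_pos w.2
      _ ≤ _ := by
          set k : {x : OffT // projF T p (x : Word) = v} →
              {x : {w : Word // w ∈ T ∧ projTo T p w v} // ¬ (x : Word) = v} :=
            fun x => ⟨⟨((x : OffT) : Word), (x : OffT).2.1,
                (by have h := projTo_projF hp (x : OffT).2.1; rw [x.2] at h; exact h)⟩,
              fun h => (x : OffT).2.2 (by rw [h]; exact hv)⟩ with hk
          have hkinj : Function.Injective k := by
            intro x₁ x₂ h
            have : ((x₁ : OffT) : Word) = ((x₂ : OffT) : Word) :=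
              congrArg (fun s : {x : {w : Word // w ∈ T ∧ projTo T p w v} // ¬ (x : Word) = v} =>
                ((s : {w : Word // w ∈ T ∧ projTo T p w v}) : Word)) h
            ext1; ext1; exact this
          exact le_trans (le_of_eq (tsum_congr fun x => rfl))
            (ENNReal.tsum_comp_le_tsum_of_injective hkinj
              (fun x => eK U a ((x : {w : Word // w ∈ T ∧ projTo T p w v}) : Word)))
  -- assemble
  have hsplit : eV T p U a v = eK U a v +
      ∑' x : {x : {w : Word // w ∈ T ∧ projTo T p w v} // ¬ (x : Word) = v},
        eK U a (((x : {w : Word // w ∈ T ∧ projTo T p w v})) : Word) := by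
    rw [eV, tsum_split (f := fun w : {w : Word // w ∈ T ∧ projTo T p w v} => eK U a (w : Word))
      (Q := fun w => (w : Word) = v)]
    congr 1
    rw [tsum_eq_single (⟨⟨v, hvT, Or.inl ⟨hv, rfl⟩⟩, rfl⟩ :
      {x : {w : Word // w ∈ T ∧ projTo T p w v} // (x : Word) = v})
      (fun b hb => absurd (Subtype.ext (Subtype.ext b.2)) hb)]
  rw [hsplit]
  exact add_le_add le_rfl p2

lemma cb (hT : IsTree T) (hp : IsEnd T p) (hM : IsTransMatrix T U) (hA : IsAUD T U) :
    ∀ δ' : List Word, δ' ≠ [] → (∀ x ∈ δ', x ∈ endTree T p) → ∀ a ∈ endTree T p,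
    (∑' l : {l : List Word // (∀ x ∈ l, x ∈ T) ∧ filtS (endTree T p) l = δ' ∧
        l.getLast? = δ'.getLast?},
      ewgt (eK U) (a :: (l : List Word))) ≤ ewgt (eV T p U) (a :: δ') := by
  intro δ'
  induction δ' with
  | nil => intro h; exact absurd rfl h
  | cons v δ'' ih =>
    intro _ hmem a haS
    have hvS : v ∈ endTree T p := hmem v (List.mem_cons_self)
    have haT : a ∈ T := S_sub hT hp haS
    set Sub := {l : List Word // (∀ x ∈ l, x ∈ T) ∧ filtS (endTree T p) l = v :: δ'' ∧
      l.getLast? = (v :: δ'').getLast?} with hSub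
    have dec : ∀ l : Sub, ∃ ob t, (l : List Word) = ob ++ v :: t ∧
        (∀ x ∈ ob, x ∉ endTree T p) ∧ filtS (endTree T p) t = δ'' :=
      fun l => filter_split l.2.2.1
    by_cases hδ : δ'' = []
    · subst hδ
      -- every l = ob ++ [v]
      have hkey : ∀ l : Sub, ∃ ob, (l : List Word) = ob ++ [v] ∧
          (∀ x ∈ ob, x ∈ T ∧ x ∉ endTree T p) := by
        intro l
        obtain ⟨ob, t, hl, hob, ht⟩ := dec l
        have htnil : t = [] := by
          by_contra htne
          have h1 : (l : List Word).getLast? = t.getLast? := by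
            rw [hl, getLast?_append_ne (by simp : v :: t ≠ []),
              show v :: t = [v] ++ t from rfl, getLast?_append_ne htne]
          have h2 : (l : List Word).getLast? = some v := l.2.2.2
          have hy1 : t.getLast? = some (t.getLast htne) := List.getLast?_eq_getLast htne
          have hy2 : t.getLast htne ∈ t := List.getLast_mem htne
          set y := t.getLast htne
          have : y = v := by rw [h1, hy1] at h2; exact Option.some_inj.mp h2
          exact (filtS_nil_all ht y hy2) (this ▸ hvS)
        subst htnil
        refine ⟨ob, hl, fun x hx => ⟨l.2.1 x (by rw [hl]; exact List.mem_append_left _ hx),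
          hob x hx⟩⟩
      set i : Sub → {l : List Word // ∀ x ∈ l, x ∈ T ∧ x ∉ endTree T p} :=
        fun l => ⟨(hkey l).choose, (hkey l).choose_spec.2⟩ with hi
      have hinj : Function.Injective i := by
        intro l₁ l₂ h
        have h1 := (hkey l₁).choose_spec.1
        have h2 := (hkey l₂).choose_spec.1
        have : (hkey l₁).choose = (hkey l₂).choose := Subtype.mk_eq_mk.mp h
        ext1
        rw [h1, h2, this]
      calc (∑' l : Sub, ewgt (eK U) (a :: (l : List Word)))
          = ∑' l : Sub, (fun ob : {l : List Word // ∀ x ∈ l, x ∈ T ∧ x ∉ endTree T p} =>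
              ewgt (eK U) (a :: (ob : List Word) ++ [v])) (i l) := by
            refine tsum_congr fun l => ?_
            have h1 := (hkey l).choose_spec.1
            simp only [hi]
            conv_lhs => rw [h1]
            rfl
        _ ≤ ∑' ob : {l : List Word // ∀ x ∈ l, x ∈ T ∧ x ∉ endTree T p},
              ewgt (eK U) (a :: (ob : List Word) ++ [v]) :=
            ENNReal.tsum_comp_le_tsum_of_injective hinj _
        _ ≤ eV T p U a v := seg hT hp hM hA haT hvS
        _ = ewgt (eV T p U) (a :: [v]) := by
            rw [show a :: [v] = [a, v] from rfl, ewgt_cons_cons, ewgt_single, mul_one]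
    · -- δ'' ≠ []
      have hmem'' : ∀ x ∈ δ'', x ∈ endTree T p := fun x hx => hmem x (List.mem_cons_of_mem _ hx)
      set Sub'' := {l : List Word // (∀ x ∈ l, x ∈ T) ∧ filtS (endTree T p) l = δ'' ∧
        l.getLast? = δ''.getLast?} with hSub''
      have hkey : ∀ l : Sub, ∃ ob t, (l : List Word) = ob ++ v :: t ∧
          (∀ x ∈ ob, x ∈ T ∧ x ∉ endTree T p) ∧ ((∀ x ∈ t, x ∈ T) ∧
            filtS (endTree T p) t = δ'' ∧ t.getLast? = δ''.getLast?) := by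
        intro l
        obtain ⟨ob, t, hl, hob, ht⟩ := dec l
        have htne : t ≠ [] := by
          intro h0
          rw [h0, filtS_nil] at ht
          exact hδ ht.symm
        have hlast : t.getLast? = δ''.getLast? := by
          have h1 : (l : List Word).getLast? = t.getLast? := by
            rw [hl, getLast?_append_ne (by simp : v :: t ≠ []),
              show v :: t = [v] ++ t from rfl, getLast?_append_ne htne]
          have h2 : (v :: δ'').getLast? = δ''.getLast? := by
            rw [show v :: δ'' = [v] ++ δ'' from rfl, getLast?_append_ne hδ]
          rw [← h1, l.2.2.2, h2]
        have hmob : ∀ x ∈ ob, x ∈ T := fun x hx =>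
          l.2.1 x (by rw [hl]; exact List.mem_append_left _ hx)
        have hmt : ∀ x ∈ t, x ∈ T := fun x hx =>
          l.2.1 x (by rw [hl]; exact List.mem_append_right _ (List.mem_cons_of_mem _ hx))
        refine ⟨ob, t, hl, fun x hx => ⟨hmob x hx, hob x hx⟩, hmt, ht, hlast⟩
      set i : Sub → Σ _ : {l : List Word // ∀ x ∈ l, x ∈ T ∧ x ∉ endTree T p}, Sub'' :=
        fun l => ⟨⟨(hkey l).choose, (hkey l).choose_spec.choose_spec.2.1⟩,
          ⟨(hkey l).choose_spec.choose, (hkey l).choose_spec.choose_spec.2.2⟩⟩ with hi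
      have hinj : Function.Injective i := by
        intro l₁ l₂ h
        have h1 := (hkey l₁).choose_spec.choose_spec.1
        have h2 := (hkey l₂).choose_spec.choose_spec.1
        have hob : (hkey l₁).choose = (hkey l₂).choose :=
          congrArg (fun s : Σ _ : {l : List Word // ∀ x ∈ l, x ∈ T ∧ x ∉ endTree T p}, Sub'' =>
            (s.1 : List Word)) h
        have ht : (hkey l₁).choose_spec.choose = (hkey l₂).choose_spec.choose :=
          congrArg (fun s : Σ _ : {l : List Word // ∀ x ∈ l, x ∈ T ∧ x ∉ endTree T p}, Sub'' =>
            (s.2 : List Word)) h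
        ext1
        rw [h1, h2]
        exact congrArg₂ (fun o t : List Word => o ++ v :: t) hob ht
      calc (∑' l : Sub, ewgt (eK U) (a :: (l : List Word)))
          = ∑' l : Sub, (fun s : Σ _ : {l : List Word // ∀ x ∈ l, x ∈ T ∧ x ∉ endTree T p}, Sub'' =>
              ewgt (eK U) (a :: ((s.1 : List Word) ++ [v])) *
              ewgt (eK U) (v :: (s.2 : List Word))) (i l) := by
            refine tsum_congr fun l => ?_
            have h1 := (hkey l).choose_spec.choose_spec.1
            simp only [hi]
            conv_lhs => rw [h1]
            rw [ewgt_cons_append]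
        _ ≤ ∑' s : Σ _ : {l : List Word // ∀ x ∈ l, x ∈ T ∧ x ∉ endTree T p}, Sub'',
              ewgt (eK U) (a :: ((s.1 : List Word) ++ [v])) *
              ewgt (eK U) (v :: (s.2 : List Word)) :=
            ENNReal.tsum_comp_le_tsum_of_injective hinj _
        _ = ∑' ob : {l : List Word // ∀ x ∈ l, x ∈ T ∧ x ∉ endTree T p}, ∑' t : Sub'',
              ewgt (eK U) (a :: ((ob : List Word) ++ [v])) *
              ewgt (eK U) (v :: (t : List Word)) := ENNReal.tsum_sigma' _
        _ = ∑' ob : {l : List Word // ∀ x ∈ l, x ∈ T ∧ x ∉ endTree T p},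
              ewgt (eK U) (a :: ((ob : List Word) ++ [v])) *
              ∑' t : Sub'', ewgt (eK U) (v :: (t : List Word)) := by
            refine tsum_congr fun ob => ?_
            rw [ENNReal.tsum_mul_left]
        _ ≤ ∑' ob : {l : List Word // ∀ x ∈ l, x ∈ T ∧ x ∉ endTree T p},
              ewgt (eK U) (a :: ((ob : List Word) ++ [v])) * ewgt (eV T p U) (v :: δ'') := by
            refine ENNReal.tsum_le_tsum fun ob => ?_
            exact mul_le_mul_right (ih hδ hmem'' v hvS) _
        _ = (∑' ob : {l : List Word // ∀ x ∈ l, x ∈ T ∧ x ∉ endTree T p},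
              ewgt (eK U) (a :: ((ob : List Word) ++ [v]))) * ewgt (eV T p U) (v :: δ'') :=
            ENNReal.tsum_mul_right
        _ ≤ eV T p U a v * ewgt (eV T p U) (v :: δ'') :=
            mul_le_mul_left (seg hT hp hM hA haT hvS) _
        _ = ewgt (eV T p U) (a :: v :: δ'') := (ewgt_cons_cons _ _ _ _).symm

lemma filt_loop (hp : IsEnd T p) {γ : List Word} (h : IsLoop T γ) :
    IsLoop (endTree T p) (filtS (endTree T p) γ) := by
  obtain ⟨mid, hγ, hmem, hne⟩ := isLoop_iff.mp h
  rw [isLoop_iff]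
  refine ⟨filtS (endTree T p) mid, ?_, ?_, ?_⟩
  · rw [hγ, show ([] : Word) :: mid ++ [([] : Word)] = ([] : Word) :: (mid ++ [([] : Word)]) from rfl,
      filtS_cons_mem (root_S hp), filtS_append,
      show filtS (endTree T p) [([] : Word)] = [([] : Word)] from filtS_cons_mem (root_S hp)]
    rfl
  · intro x hx
    exact filtS_mem hx
  · intro x hx
    exact hne x (filtS_subset hx)

lemma part2 (hT : IsTree T) (hp : IsEnd T p) (hM : IsTransMatrix T U) (hA : IsAUD T U)
    (hrec : Recurrent T U) : Recurrent (endTree T p) (projMat T p U) := by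
  classical
  set S := endTree T p with hS
  set V := projMat T p U with hV
  -- summability of the loop sum
  have hloopmem : ∀ γ : {γ : List Word // IsLoop T γ}, ∀ x ∈ (γ : List Word), x ∈ T :=
    fun γ => γ.2.2.2.2.1
  have hwnn : ∀ γ : {γ : List Word // IsLoop T γ}, 0 ≤ wgt U (γ : List Word) :=
    fun γ => wgt_nonneg hM.1 _ (hloopmem γ)
  have hsum : Summable (fun γ : {γ : List Word // IsLoop T γ} => wgt U (γ : List Word)) := by
    by_contra h
    have := tsum_eq_zero_of_not_summable h
    rw [Recurrent, loopSum] at hrec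
    rw [hrec] at this
    exact one_ne_zero this
  have E1 : (∑' γ : {γ : List Word // IsLoop T γ}, ewgt (eK U) (γ : List Word)) = 1 := by
    rw [tsum_congr (fun γ : {γ : List Word // IsLoop T γ} =>
      (ewgt_eq hM.1 (γ : List Word) (hloopmem γ)).symm)]
    rw [← ENNReal.ofReal_tsum_of_nonneg hwnn hsum]
    rw [Recurrent, loopSum] at hrec
    rw [hrec]
    exact ENNReal.ofReal_one
  -- the projection map on loops
  set Φ : {γ : List Word // IsLoop T γ} → {δ : List Word // IsLoop S δ} :=
    fun γ => ⟨filtS S (γ : List Word), filt_loop hp γ.2⟩ with hΦ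
  set e := Equiv.sigmaFiberEquiv Φ with he
  have E2 : (∑' γ : {γ : List Word // IsLoop T γ}, ewgt (eK U) (γ : List Word)) =
      ∑' δ : {δ : List Word // IsLoop S δ},
        ∑' γf : {γ : {γ : List Word // IsLoop T γ} // Φ γ = δ},
          ewgt (eK U) ((γf : {γ : List Word // IsLoop T γ}) : List Word) := by
    rw [← e.tsum_eq (fun γ : {γ : List Word // IsLoop T γ} => ewgt (eK U) (γ : List Word))]
    rw [← ENNReal.tsum_sigma'
      (fun x : Σ δ : {δ : List Word // IsLoop S δ}, {γ : {γ : List Word // IsLoop T γ} // Φ γ = δ} =>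
        ewgt (eK U) ((x.2 : {γ : List Word // IsLoop T γ}) : List Word))]
    rfl
  -- fiberwise bound
  have E3 : ∀ δ : {δ : List Word // IsLoop S δ},
      (∑' γf : {γ : {γ : List Word // IsLoop T γ} // Φ γ = δ},
        ewgt (eK U) ((γf : {γ : List Word // IsLoop T γ}) : List Word)) ≤
      ewgt (eV T p U) (δ : List Word) := by
    intro δ
    obtain ⟨midδ, hδeq, hδmem, hδne⟩ := isLoop_iff.mp δ.2
    set δ' : List Word := midδ ++ [([] : Word)] with hδ'
    have hδcons : (δ : List Word) = ([] : Word) :: δ' := hδeq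
    have hδ'last : δ'.getLast? = some ([] : Word) := List.getLast?_concat
    have hδ'ne : δ' ≠ [] := by simp [hδ']
    have hδ'mem : ∀ x ∈ δ', x ∈ S := by
      intro x hx
      refine hδmem x ?_
      rw [hδcons]
      exact List.mem_cons_of_mem _ hx
    set Sub := {l : List Word // (∀ x ∈ l, x ∈ T) ∧ filtS S l = δ' ∧ l.getLast? = δ'.getLast?}
      with hSubdef
    have hkey : ∀ γf : {γ : {γ : List Word // IsLoop T γ} // Φ γ = δ},
        ((γf : {γ : List Word // IsLoop T γ}) : List Word) =
          ([] : Word) :: ((γf : {γ : List Word // IsLoop T γ}) : List Word).tail ∧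
        (∀ x ∈ ((γf : {γ : List Word // IsLoop T γ}) : List Word).tail, x ∈ T) ∧
        filtS S ((γf : {γ : List Word // IsLoop T γ}) : List Word).tail = δ' ∧
        ((γf : {γ : List Word // IsLoop T γ}) : List Word).tail.getLast? = δ'.getLast? := by
      intro γf
      obtain ⟨midγ, hγeq, hγmem, hγne⟩ := isLoop_iff.mp (γf : {γ : List Word // IsLoop T γ}).2
      have htail : ((γf : {γ : List Word // IsLoop T γ}) : List Word).tail =
          midγ ++ [([] : Word)] := by rw [hγeq]; rfl
      have hcons : ((γf : {γ : List Word // IsLoop T γ}) : List Word) =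
          ([] : Word) :: ((γf : {γ : List Word // IsLoop T γ}) : List Word).tail := by
        rw [htail]; exact hγeq
      have hfilt : filtS S ((γf : {γ : List Word // IsLoop T γ}) : List Word) =
          ([] : Word) :: filtS S ((γf : {γ : List Word // IsLoop T γ}) : List Word).tail := by
        conv_lhs => rw [hcons]
        exact filtS_cons_mem (root_S hp)
      have hΦδ : filtS S ((γf : {γ : List Word // IsLoop T γ}) : List Word) = (δ : List Word) :=
        congrArg Subtype.val γf.2
      rw [hδcons, hfilt] at hΦδ
      have hfilttail : filtS S ((γf : {γ : List Word // IsLoop T γ}) : List Word).tail = δ' :=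
        (List.cons_eq_cons.mp hΦδ).2
      refine ⟨hcons, ?_, hfilttail, ?_⟩
      · intro x hx
        exact hγmem x (by rw [hcons]; exact List.mem_cons_of_mem _ hx)
      · rw [htail, List.getLast?_concat, hδ'last]
    set i : {γ : {γ : List Word // IsLoop T γ} // Φ γ = δ} → Sub :=
      fun γf => ⟨((γf : {γ : List Word // IsLoop T γ}) : List Word).tail,
        (hkey γf).2.1, (hkey γf).2.2.1, (hkey γf).2.2.2⟩ with hidef
    have hinj : Function.Injective i := by
      intro γ₁ γ₂ h
      have htl := Subtype.mk_eq_mk.mp h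
      ext1; ext1
      rw [(hkey γ₁).1, (hkey γ₂).1, htl]
    calc (∑' γf : {γ : {γ : List Word // IsLoop T γ} // Φ γ = δ},
          ewgt (eK U) ((γf : {γ : List Word // IsLoop T γ}) : List Word))
        = ∑' γf, (fun l : Sub => ewgt (eK U) (([] : Word) :: (l : List Word))) (i γf) := by
          refine tsum_congr fun γf => ?_
          conv_lhs => rw [(hkey γf).1]
      _ ≤ ∑' l : Sub, ewgt (eK U) (([] : Word) :: (l : List Word)) :=
          ENNReal.tsum_comp_le_tsum_of_injective hinj _
      _ ≤ ewgt (eV T p U) (([] : Word) :: δ') :=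
          cb hT hp hM hA δ' hδ'ne hδ'mem ([] : Word) (root_S hp)
      _ = ewgt (eV T p U) (δ : List Word) := by rw [hδcons]
  -- total bound on the projected loop sum
  have E5 : (∑' δ : {δ : List Word // IsLoop S δ}, ewgt (eV T p U) (δ : List Word)) ≤ 1 := by
    set i : {δ : List Word // IsLoop S δ} → {γ : List Word // FPP S {([] : Word)} ([] : Word) γ} :=
      fun δ => ⟨(δ : List Word), by
        obtain ⟨midδ, hδeq, hδmem, hδne⟩ := isLoop_iff.mp δ.2
        exact ⟨midδ, ([] : Word), hδeq, hδmem,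
          fun x hx h0 => hδne x hx (Set.mem_singleton_iff.mp h0), rfl⟩⟩ with hidef
    have hinj : Function.Injective i := by
      intro δ₁ δ₂ h
      ext1
      exact Subtype.mk_eq_mk.mp h
    refine le_trans (le_of_eq (tsum_congr fun δ => rfl))
      (le_trans (ENNReal.tsum_comp_le_tsum_of_injective hinj
        (fun γ => ewgt (eV T p U) (γ : List Word))) ?_)
    exact fpp_le_one (fun a ha => le_of_eq (eV_row hT hp hM (S_sub hT hp ha)))
      (root_S hp)
  have E4 : (∑' δ : {δ : List Word // IsLoop S δ}, ewgt (eV T p U) (δ : List Word)) = 1 := by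
    refine le_antisymm E5 ?_
    calc (1 : ℝ≥0∞) = ∑' γ : {γ : List Word // IsLoop T γ}, ewgt (eK U) (γ : List Word) := E1.symm
      _ = _ := E2
      _ ≤ _ := ENNReal.tsum_le_tsum E3
  -- convert back to the real-valued loop sum
  have hVnn : ∀ a ∈ S, ∀ b ∈ S, 0 ≤ V a b :=
    fun a ha b _ => projMat_nonneg hM (S_sub hT hp ha) b
  have hVloopmem : ∀ δ : {δ : List Word // IsLoop S δ}, ∀ x ∈ (δ : List Word), x ∈ S :=
    fun δ => δ.2.2.2.2.1
  have hKagree : ∀ a ∈ S, ∀ b ∈ S, eV T p U a b = eK V a b := by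
    intro a ha b _
    rw [eV_eq hM (S_sub hT hp ha)]
    rfl
  have E6 : (∑' δ : {δ : List Word // IsLoop S δ},
      ENNReal.ofReal (wgt V (δ : List Word))) = 1 := by
    rw [tsum_congr (fun δ : {δ : List Word // IsLoop S δ} =>
      (ewgt_eq hVnn (δ : List Word) (hVloopmem δ)))]
    rw [tsum_congr (fun δ : {δ : List Word // IsLoop S δ} =>
      (ewgt_congr hKagree (δ : List Word) (hVloopmem δ)).symm)]
    exact E4
  rw [Recurrent, loopSum]
  have hnt : ∀ δ : {δ : List Word // IsLoop S δ},
      ENNReal.ofReal (wgt V (δ : List Word)) ≠ ⊤ := fun δ => ENNReal.ofReal_ne_top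
  have := ENNReal.tsum_toReal_eq hnt
  rw [E6] at this
  rw [← tsum_congr (fun δ : {δ : List Word // IsLoop S δ} =>
    ENNReal.toReal_ofReal (wgt_nonneg hVnn (δ : List Word) (hVloopmem δ)))]
  rw [← this]
  simp

end EP
end EPproof

theorem end_projection (T : Set Word) (hT : IsTree T) (hinf : T.Infinite)
    (U : Word → Word → ℝ) (hM : IsTransMatrix T U) (hA : IsAUD T U)
    (hI : IrreducibleOn T U) :
    (∀ p : ℕ → Word, IsEnd T p →
      IsTransMatrix (endTree T p) (projMat T p U) ∧
      IsAUD (endTree T p) (projMat T p U) ∧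
      IrreducibleOn (endTree T p) (projMat T p U)) ∧
    ((∃ p : ℕ → Word, IsEnd T p ∧ ¬ Recurrent (endTree T p) (projMat T p U)) →
      ¬ Recurrent T U) := by
  constructor
  · intro p hp
    exact ⟨EP.part1_trans hT hp hM, EP.part1_aud hT hp hM hA, EP.part1_irr hT hp hM hA hI⟩
  · rintro ⟨p, hp, hnr⟩ hrec
    exact hnr (EP.part2 hT hp hM hA hrec)
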